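/- arXiv:1407.5663 — 3 statements merged into one kernel-verified Lean document; each statement's English description precedes it below -/
import Mathlib

section
/- If a density matrix ρ on C^{pq} is separable, i.e., ρ = Σ_i c_i ρ_i ⊗ η_i with c_i ≥ 0, Σ c_i = 1, ρ_i density matrices of size p and η_i density matrices of size q, then the (p,q)-partial transpose ρ^PT is positive semidefinite. -/
open scoped Matrix Kronecker ComplexOrder

/-- The (p,q)-partial transpose: `A^PT_{(i,j)(k,l)} = A_{(i,l)(k,j)}`. -/
def partialTranspose {p q : ℕ} (A : Matrix (Fin p × Fin q) (Fin p × Fin q) ℂ) :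
    Matrix (Fin p × Fin q) (Fin p × Fin q) ℂ :=
  Matrix.of fun x y => A (x.1, y.2) (y.1, x.2)

/-- A density matrix: Hermitian positive semidefinite with unit trace. -/
def IsDensity {n : Type*} [Fintype n] (A : Matrix n n ℂ) : Prop :=
  A.PosSemidef ∧ A.trace = 1

/-- Separability of a density matrix on `ℂ^p ⊗ ℂ^q`. -/
def Separable {p q : ℕ} (A : Matrix (Fin p × Fin q) (Fin p × Fin q) ℂ) : Prop :=
  ∃ (m : ℕ) (c : Fin m → ℝ) (ρ : Fin m → Matrix (Fin p) (Fin p) ℂ)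
    (η : Fin m → Matrix (Fin q) (Fin q) ℂ),
    (∀ i, 0 ≤ c i) ∧ (∑ i, c i = 1) ∧ (∀ i, IsDensity (ρ i)) ∧ (∀ i, IsDensity (η i)) ∧
    A = ∑ i, (c i : ℂ) • (ρ i ⊗ₖ η i)

lemma conjTranspose_kronecker {m n : Type*} [Fintype m] [Fintype n]
    (A : Matrix m m ℂ) (B : Matrix n n ℂ) : (A ⊗ₖ B)ᴴ = Aᴴ ⊗ₖ Bᴴ := by
  ext x y
  simp [Matrix.conjTranspose_apply, Matrix.kroneckerMap_apply, mul_comm]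

lemma PosSemidef.kronecker {m n : Type*} [Fintype m] [Fintype n] [DecidableEq m] [DecidableEq n]
    {A : Matrix m m ℂ} {B : Matrix n n ℂ}
    (hA : A.PosSemidef) (hB : B.PosSemidef) : (A ⊗ₖ B).PosSemidef := by
  exact Matrix.PosSemidef.kronecker hA hB

lemma Matrix.PosSemidef.real_smul {n : Type*} [Fintype n] {A : Matrix n n ℂ}
    (hA : A.PosSemidef) {c : ℝ} (hc : 0 ≤ c) : ((c : ℂ) • A).PosSemidef := by
  constructor
  · unfold Matrix.IsHermitian
    rw [Matrix.conjTranspose_smul, hA.1]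
    congr 1
    simp
  · exact (hA.smul (show (0:ℂ) ≤ (c:ℂ) by exact_mod_cast hc)).2

theorem peres_criterion {p q : ℕ} (ρ : Matrix (Fin p × Fin q) (Fin p × Fin q) ℂ)
    (hρ : IsDensity ρ) (hsep : Separable ρ) :
    (partialTranspose ρ).PosSemidef := by
  obtain ⟨m, c, σ, η, hc, _, hσ, hη, rfl⟩ := hsep
  have key : partialTranspose (∑ i, (c i : ℂ) • (σ i ⊗ₖ η i))
      = ∑ i, (c i : ℂ) • (σ i ⊗ₖ (η i)ᵀ) := by
    ext x y
    simp only [partialTranspose, Matrix.of_apply, Matrix.sum_apply, Matrix.smul_apply,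
      Matrix.kroneckerMap_apply, Matrix.transpose_apply]
  rw [key]
  refine Finset.sum_induction _ (fun M : Matrix (Fin p × Fin q) (Fin p × Fin q) ℂ => M.PosSemidef)
    (fun a b ha hb => ha.add hb) Matrix.PosSemidef.zero fun i _ => ?_
  exact (PosSemidef.kronecker (hσ i).1 ((hη i).1.transpose)).real_smul (hc i)
end

section
/- For j ≥ 0 and n ≥ 4 + j, the number of labeled simple graphs on n vertices with exactly (n-1)(n-2)/2 − j + 1 edges having at least one vertex of degree 1 equals n(n-1) · C((n-1)(n-2)/2, j), where C denotes the binomial coefficient. -/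
/-- `Mcount n i` : the number of labeled simple graphs on `n` vertices with
exactly `i` edges having at least one vertex of degree 1. -/
noncomputable def Mcount (n i : ℕ) : ℕ :=
  Set.ncard {G : SimpleGraph (Fin n) |
    G.edgeSet.ncard = i ∧ ∃ v, (G.neighborSet v).ncard = 1}

open Finset SimpleGraph

lemma mem_offDiag_image {α : Type*} [DecidableEq α] {s : Finset α} {e : Sym2 α} :
    e ∈ s.offDiag.image Sym2.mk.uncurry ↔ ¬ e.IsDiag ∧ ∀ x ∈ e, x ∈ s := by
  induction e with
  | _ a b =>
    simp only [Finset.mem_image, Finset.mem_offDiag, Sym2.isDiag_iff_proj_eq, Sym2.mem_iff]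
    constructor
    · rintro ⟨⟨x, y⟩, ⟨hx, hy, hxy⟩, h⟩
      rw [Function.uncurry_apply_pair, Sym2.eq_iff] at h
      rcases h with ⟨rfl, rfl⟩ | ⟨rfl, rfl⟩
      · exact ⟨hxy, by rintro z (rfl | rfl) <;> assumption⟩
      · exact ⟨fun hab => hxy hab.symm, by rintro z (rfl | rfl) <;> assumption⟩
    · rintro ⟨hd, hmem⟩
      exact ⟨(a, b), ⟨hmem a (Or.inl rfl), hmem b (Or.inr rfl), hd⟩, rfl⟩

/-- The pool of possible non-diagonal pairs avoiding `v`. -/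
def Ev (n : ℕ) (v : Fin n) : Finset (Sym2 (Fin n)) :=
  (Finset.univ.erase v).offDiag.image Sym2.mk.uncurry

lemma mem_Ev {n : ℕ} {v : Fin n} {e : Sym2 (Fin n)} :
    e ∈ Ev n v ↔ ¬ e.IsDiag ∧ v ∉ e := by
  rw [Ev, mem_offDiag_image]
  constructor
  · rintro ⟨hd, h⟩
    refine ⟨hd, fun hv => ?_⟩
    exact (Finset.mem_erase.mp (h v hv)).1 rfl
  · rintro ⟨hd, hv⟩
    exact ⟨hd, fun x hx => Finset.mem_erase.mpr ⟨fun h => hv (h ▸ hx), Finset.mem_univ x⟩⟩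

lemma card_Ev {n : ℕ} (v : Fin n) : (Ev n v).card = (n - 1).choose 2 := by
  rw [Ev, Sym2.card_image_offDiag, Finset.card_erase_of_mem (Finset.mem_univ v),
    Finset.card_univ, Fintype.card_fin]

/-- ncard of the edge set as edgeFinset card. -/
lemma ncard_edgeSet {V : Type*} [Fintype V] (G : SimpleGraph V) [Fintype G.edgeSet] :
    G.edgeSet.ncard = G.edgeFinset.card := by
  rw [← SimpleGraph.coe_edgeFinset, Set.ncard_coe_finset]

lemma ncard_neighborSet {V : Type*} (G : SimpleGraph V) (v : V)
    [Fintype (G.neighborSet v)] :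
    (G.neighborSet v).ncard = G.degree v := by
  rw [SimpleGraph.degree, SimpleGraph.neighborFinset, ← Set.ncard_coe_finset,
    Set.coe_toFinset]

/-- Uniqueness of degree-one vertex when the graph has many edges. -/
lemma unique_deg_one {n j : ℕ} (hn : 4 + j ≤ n) (G : SimpleGraph (Fin n))
    (hc : G.edgeSet.ncard = (n - 1).choose 2 - j + 1)
    {u v : Fin n} (hu : (G.neighborSet u).ncard = 1) (hv : (G.neighborSet v).ncard = 1) :
    u = v := by
  classical
  by_contra hne
  rw [ncard_edgeSet] at hc
  rw [ncard_neighborSet] at hu hv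
  set Euv : Finset (Sym2 (Fin n)) := ((Finset.univ.erase v).erase u).offDiag.image Sym2.mk.uncurry with hEuv
  have hsub : G.edgeFinset ⊆ G.incidenceFinset u ∪ G.incidenceFinset v ∪ Euv := by
    intro e he
    rw [SimpleGraph.mem_edgeFinset] at he
    simp only [Finset.mem_union, SimpleGraph.mem_incidenceFinset]
    by_cases hu' : u ∈ e
    · exact Or.inl (Or.inl ⟨he, hu'⟩)
    by_cases hv' : v ∈ e
    · exact Or.inl (Or.inr ⟨he, hv'⟩)
    · refine Or.inr (mem_offDiag_image.mpr ⟨G.not_isDiag_of_mem_edgeSet he, fun x hx => ?_⟩)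
      refine Finset.mem_erase.mpr ⟨fun h => hu' (h ▸ hx), Finset.mem_erase.mpr
        ⟨fun h => hv' (h ▸ hx), Finset.mem_univ x⟩⟩
  have hbound : G.edgeFinset.card ≤ 1 + 1 + (n - 2).choose 2 := by
    calc G.edgeFinset.card ≤ (G.incidenceFinset u ∪ G.incidenceFinset v ∪ Euv).card :=
          Finset.card_le_card hsub
      _ ≤ (G.incidenceFinset u ∪ G.incidenceFinset v).card + Euv.card :=
          Finset.card_union_le _ _
      _ ≤ (G.incidenceFinset u).card + (G.incidenceFinset v).card + Euv.card := by
          exact Nat.add_le_add_right (Finset.card_union_le _ _) _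
      _ = 1 + 1 + Euv.card := by
          rw [SimpleGraph.card_incidenceFinset_eq_degree,
            SimpleGraph.card_incidenceFinset_eq_degree, hu, hv]
      _ ≤ 1 + 1 + (n - 2).choose 2 := by
          refine Nat.add_le_add_left (le_of_eq ?_) _
          rw [hEuv, Sym2.card_image_offDiag, Finset.card_erase_of_mem
            (Finset.mem_erase.mpr ⟨hne, Finset.mem_univ u⟩),
            Finset.card_erase_of_mem (Finset.mem_univ v), Finset.card_univ, Fintype.card_fin]
          congr 1
  have hpas : (n - 1).choose 2 = (n - 2) + (n - 2).choose 2 := by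
    have h1 : n - 1 = (n - 2) + 1 := by omega
    rw [h1, Nat.choose_succ_succ, Nat.choose_one_right]
  omega

lemma constructed_edgeSet {n : ℕ} {v w : Fin n} (hw : w ≠ v) {s : Finset (Sym2 (Fin n))}
    (hs : s ⊆ Ev n v) :
    (SimpleGraph.fromEdgeSet (insert s(v, w) ↑s)).edgeSet = insert s(v, w) (↑s : Set (Sym2 (Fin n))) := by
  rw [SimpleGraph.edgeSet_fromEdgeSet]
  refine sdiff_eq_self_iff_disjoint.mpr (Set.disjoint_left.mpr ?_)
  intro e hdiag hmem
  rw [Sym2.mem_diagSet] at hdiag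
  rcases hmem with rfl | hmem
  · exact hw (Sym2.mk_isDiag_iff.mp hdiag).symm
  · exact (mem_Ev.mp (hs hmem)).1 hdiag

lemma constructed_neighborSet {n : ℕ} {v w : Fin n} (hw : w ≠ v) {s : Finset (Sym2 (Fin n))}
    (hs : s ⊆ Ev n v) :
    (SimpleGraph.fromEdgeSet (insert s(v, w) (↑s : Set (Sym2 (Fin n))))).neighborSet v = {w} := by
  ext x
  simp only [SimpleGraph.mem_neighborSet, SimpleGraph.fromEdgeSet_adj,
    Set.mem_insert_iff, Finset.mem_coe, Set.mem_singleton_iff]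
  constructor
  · rintro ⟨hmem, hne⟩
    rcases hmem with h | h
    · exact Sym2.congr_right.mp h
    · exact absurd (Sym2.mem_mk_left v x) (mem_Ev.mp (hs h)).2
  · rintro rfl
    exact ⟨Or.inl rfl, fun h => hw h.symm⟩

lemma vw_not_mem {n : ℕ} {v w : Fin n} {s : Finset (Sym2 (Fin n))} (hs : s ⊆ Ev n v) :
    s(v, w) ∉ s := fun h => (mem_Ev.mp (hs h)).2 (Sym2.mem_mk_left v w)

theorem mcount_near_max (j n : ℕ) (hn : 4 + j ≤ n) :
    Mcount n ((n - 1) * (n - 2) / 2 - j + 1) =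
      n * (n - 1) * Nat.choose ((n - 1) * (n - 2) / 2) j := by
  classical
  have hNc : (n - 1).choose 2 = (n - 1) * (n - 2) / 2 := by
    rw [Nat.choose_two_right]
    congr 2
  set N := (n - 1) * (n - 2) / 2 with hNdef
  have hpas : (n - 1).choose 2 = (n - 2) + (n - 2).choose 2 := by
    have h1 : n - 1 = (n - 2) + 1 := by omega
    rw [h1, Nat.choose_succ_succ, Nat.choose_one_right]
  have hjN : j + 2 ≤ N := by omega
  set i := N - j + 1 with hidef
  set P : SimpleGraph (Fin n) → Prop :=
    fun G => G.edgeSet.ncard = i ∧ ∃ v, (G.neighborSet v).ncard = 1 with hP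
  have hMc : Mcount n i = (Finset.univ.filter P).card := by
    rw [Mcount, ← Set.ncard_coe_finset]
    congr 1
    ext G
    simp [hP]
  set T : Finset ((_ : Fin n) × Fin n × Finset (Sym2 (Fin n))) :=
    Finset.univ.sigma (fun v => (Finset.univ.erase v) ×ˢ (Ev n v).powersetCard (N - j)) with hT
  have hmemT : ∀ t : (_ : Fin n) × Fin n × Finset (Sym2 (Fin n)),
      t ∈ T ↔ t.2.1 ≠ t.1 ∧ t.2.2 ⊆ Ev n t.1 ∧ t.2.2.card = N - j := by
    intro t
    rw [hT, Finset.mem_sigma, Finset.mem_product, Finset.mem_erase, Finset.mem_powersetCard]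
    simp only [Finset.mem_univ, true_and, and_true]
  have key : T.card = (Finset.univ.filter P).card := by
    apply Finset.card_bij (fun t _ =>
      SimpleGraph.fromEdgeSet (↑(insert s(t.1, t.2.1) t.2.2) : Set (Sym2 (Fin n))))
    · -- maps into filter P
      rintro ⟨v, w, s⟩ ht
      obtain ⟨hwv, hs, hcard⟩ := (hmemT _).mp ht
      replace hwv : w ≠ v := hwv
      replace hs : s ⊆ Ev n v := hs
      replace hcard : s.card = N - j := hcard
      dsimp only
      rw [Finset.mem_filter]
      refine ⟨Finset.mem_univ _, ?_, v, ?_⟩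
      · rw [constructed_edgeSet hwv hs, ← Finset.coe_insert, Set.ncard_coe_finset,
          Finset.card_insert_of_notMem (vw_not_mem hs), hcard]
      · rw [constructed_neighborSet hwv hs]
        exact Set.ncard_singleton w
    · -- injective
      rintro ⟨v₁, w₁, s₁⟩ ht₁ ⟨v₂, w₂, s₂⟩ ht₂ heq
      obtain ⟨hwv₁, hs₁, hcard₁⟩ := (hmemT _).mp ht₁
      obtain ⟨hwv₂, hs₂, hcard₂⟩ := (hmemT _).mp ht₂
      replace hwv₁ : w₁ ≠ v₁ := hwv₁
      replace hs₁ : s₁ ⊆ Ev n v₁ := hs₁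
      replace hcard₁ : s₁.card = N - j := hcard₁
      replace hwv₂ : w₂ ≠ v₂ := hwv₂
      replace hs₂ : s₂ ⊆ Ev n v₂ := hs₂
      replace hcard₂ : s₂.card = N - j := hcard₂
      replace heq : SimpleGraph.fromEdgeSet (insert s(v₁, w₁) (↑s₁ : Set (Sym2 (Fin n)))) =
          SimpleGraph.fromEdgeSet (insert s(v₂, w₂) (↑s₂ : Set (Sym2 (Fin n)))) := heq
      have hnc : ∀ (v w : Fin n) (hw : w ≠ v) (s : Finset (Sym2 (Fin n))) (hs : s ⊆ Ev n v)
          (hc : s.card = N - j),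
          (SimpleGraph.fromEdgeSet (insert s(v, w) (↑s : Set (Sym2 (Fin n))))).edgeSet.ncard =
            (n - 1).choose 2 - j + 1 := by
        intro v w hw s hs hc
        rw [constructed_edgeSet hw hs, ← Finset.coe_insert, Set.ncard_coe_finset,
          Finset.card_insert_of_notMem (vw_not_mem hs), hc, hNc]
      have hdeg : ∀ (v w : Fin n) (hw : w ≠ v) (s : Finset (Sym2 (Fin n))) (hs : s ⊆ Ev n v),
          ((SimpleGraph.fromEdgeSet (insert s(v, w) (↑s : Set (Sym2 (Fin n))))).neighborSet
            v).ncard = 1 := by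
        intro v w hw s hs
        rw [constructed_neighborSet hw hs]; exact Set.ncard_singleton w
      have hv : v₁ = v₂ := by
        apply unique_deg_one hn
          (SimpleGraph.fromEdgeSet (insert s(v₁, w₁) (↑s₁ : Set (Sym2 (Fin n)))))
          (hnc v₁ w₁ hwv₁ s₁ hs₁ hcard₁) (hdeg v₁ w₁ hwv₁ s₁ hs₁)
        rw [heq]
        exact hdeg v₂ w₂ hwv₂ s₂ hs₂
      subst hv
      have hw : w₁ = w₂ := by
        have h1 := constructed_neighborSet hwv₁ hs₁
        have h2 := constructed_neighborSet hwv₂ hs₂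
        rw [heq, h2] at h1
        exact (Set.singleton_eq_singleton_iff.mp h1).symm
      subst hw
      have hs : s₁ = s₂ := by
        have h1 := constructed_edgeSet hwv₁ hs₁
        have h2 := constructed_edgeSet hwv₂ hs₂
        rw [heq, h2] at h1
        rw [← Finset.coe_insert, ← Finset.coe_insert] at h1
        have h3 := Finset.coe_injective h1
        have e1 := Finset.erase_insert (vw_not_mem (w := w₁) hs₁)
        have e2 := Finset.erase_insert (vw_not_mem (w := w₁) hs₂)
        rw [← e1, ← e2, h3]
      rw [hs]
    · -- surjective
      intro G hG
      rw [Finset.mem_filter] at hG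
      obtain ⟨-, hc, v, hv⟩ := hG
      obtain ⟨w, hw⟩ := Set.ncard_eq_one.mp hv
      have hadj : G.Adj v w := by
        have : w ∈ G.neighborSet v := by rw [hw]; exact rfl
        exact this
      have hwv : w ≠ v := fun h => G.irrefl (h ▸ hadj)
      have hvw_mem : s(v, w) ∈ G.edgeFinset := SimpleGraph.mem_edgeFinset.mpr hadj
      refine ⟨⟨v, w, G.edgeFinset.erase s(v, w)⟩, ?_, ?_⟩
      · rw [hmemT]
        refine ⟨hwv, ?_, ?_⟩
        · intro e he
          obtain ⟨hne, he'⟩ := Finset.mem_erase.mp he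
          rw [SimpleGraph.mem_edgeFinset] at he'
          rw [mem_Ev]
          refine ⟨G.not_isDiag_of_mem_edgeSet he', fun hv' => hne ?_⟩
          induction e with
          | _ a b =>
            rw [Sym2.mem_iff] at hv'
            rw [SimpleGraph.mem_edgeSet] at he'
            rcases hv' with rfl | rfl
            · have : b ∈ G.neighborSet v := he'
              rw [hw, Set.mem_singleton_iff] at this
              rw [this]
            · have : a ∈ G.neighborSet v := he'.symm
              rw [hw, Set.mem_singleton_iff] at this
              rw [this, Sym2.eq_swap]
        · rw [Finset.card_erase_of_mem hvw_mem, ← ncard_edgeSet, hc]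
          omega
      · show SimpleGraph.fromEdgeSet
            (insert s(v, w) (↑(G.edgeFinset.erase s(v, w)) : Set (Sym2 (Fin n)))) = G
        rw [← Finset.coe_insert, Finset.insert_erase hvw_mem, SimpleGraph.coe_edgeFinset,
          SimpleGraph.fromEdgeSet_edgeSet]
  have hcardT : T.card = n * ((n - 1) * N.choose j) := by
    rw [hT, Finset.card_sigma]
    have : ∀ v : Fin n, ((Finset.univ.erase v) ×ˢ (Ev n v).powersetCard (N - j)).card =
        (n - 1) * N.choose j := by
      intro v
      rw [Finset.card_product, Finset.card_powersetCard, card_Ev,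
        Finset.card_erase_of_mem (Finset.mem_univ v), Finset.card_univ, Fintype.card_fin, hNc]
      congr 1
      rw [Nat.choose_symm (by omega : j ≤ N)]
    rw [Finset.sum_congr rfl (fun v _ => this v), Finset.sum_const, Finset.card_univ,
      Fintype.card_fin, smul_eq_mul]
  rw [hMc, ← key, hcardT, mul_assoc]
end

section
/- Let A be the Laplacian matrix of a graph on pq vertices, decomposed into p² blocks A^{i,j} of size q×q. If there exists a row index i such that exactly one off-diagonal block A^{i,j} (j ≠ i) fails to be line sum symmetric and all other off-diagonal blocks A^{i,k} (k ≠ i, k ≠ j) are line sum symmetric, then the (p,q)-partial transpose A^PT does not have all row sums equal to zero. -/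
open scoped Matrix

open scoped Classical in
/-- The Laplacian matrix `D - Adj` of a graph, over `ℂ`. -/
noncomputable def lapMat {V : Type*} [Fintype V] (G : SimpleGraph V) : Matrix V V ℂ :=
  Matrix.of fun x y =>
    (if x = y then ((G.neighborSet x).ncard : ℂ) else 0) - (if G.Adj x y then 1 else 0)

/-- The `(i,j)` block of size `q×q` of a `pq×pq` matrix. -/
def blockOf {p q : ℕ} (A : Matrix (Fin p × Fin q) (Fin p × Fin q) ℂ) (i j : Fin p) :
    Matrix (Fin q) (Fin q) ℂ :=
  Matrix.of fun k l => A (i, k) (j, l)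

/-- A square matrix is line sum symmetric if each row sum equals the
corresponding column sum. -/
def LineSumSym {q : ℕ} (M : Matrix (Fin q) (Fin q) ℂ) : Prop :=
  ∀ i, ∑ j, M i j = ∑ j, M j i

theorem pt_not_zero_row_sums {p q : ℕ} (G : SimpleGraph (Fin p × Fin q))
    (A : Matrix (Fin p × Fin q) (Fin p × Fin q) ℂ) (hA : A = lapMat G)
    (i j : Fin p) (hij : j ≠ i) (hbad : ¬ LineSumSym (blockOf A i j))
    (hgood : ∀ k : Fin p, k ≠ i → k ≠ j → LineSumSym (blockOf A i k)) :
    ¬ (∀ x, ∑ y, partialTranspose A x y = 0) := by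
  subst hA
  intro h
  apply hbad
  intro l
  classical
  have hsym : ∀ x y, lapMat G x y = lapMat G y x := by
    intro x y
    by_cases hxy : x = y
    · subst hxy; rfl
    · simp [lapMat, hxy, Ne.symm hxy, G.adj_comm]
  have hrow : ∀ x : Fin p × Fin q, ∑ y, lapMat G x y = 0 := by
    intro x
    simp only [lapMat, Matrix.of_apply, Finset.sum_sub_distrib]
    simp [Finset.sum_boole, sub_eq_zero]
    have e : (G.neighborSet x).toFinset
        = Finset.filter (fun y => G.Adj x y) Finset.univ := by
      ext y; simp
    rw [Set.ncard_eq_toFinset_card', e]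
    refine (Finset.sum_eq_single x ?_ ?_).trans (if_pos rfl)
    · intro b _ hb; exact if_neg fun h => hb h.symm
    · intro hx; exact absurd (Finset.mem_univ x) hx
  have hcol : ∑ m : Fin p, ∑ c : Fin q, lapMat G (i, c) (m, l) = 0 := by
    have := h (i, l)
    simpa [partialTranspose, Fintype.sum_prod_type] using this
  have hrowl : ∑ m : Fin p, ∑ c : Fin q, lapMat G (i, l) (m, c) = 0 := by
    have := hrow (i, l)
    simpa [Fintype.sum_prod_type] using this
  have key : ∑ m : Fin p,
      ((∑ c, lapMat G (i, l) (m, c)) - (∑ c, lapMat G (i, c) (m, l))) = 0 := by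
    rw [Finset.sum_sub_distrib, hrowl, hcol, sub_zero]
  have hterm : ∀ m ∈ Finset.univ, m ≠ j →
      (∑ c, lapMat G (i, l) (m, c)) - (∑ c, lapMat G (i, c) (m, l)) = 0 := by
    intro m _ hm
    rw [sub_eq_zero]
    by_cases hmi : m = i
    · subst hmi
      exact Finset.sum_congr rfl fun c _ => hsym (m, l) (m, c)
    · have := hgood m hmi hm l
      simpa [blockOf] using this
  rw [Finset.sum_eq_single_of_mem j (Finset.mem_univ j) hterm] at key
  have := sub_eq_zero.mp key
  simpa [blockOf] using this
end
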